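/- Let A ∈ ℝ^{m×n} have nonzero rows a_1^T,…,a_m^T, let W = Diag(w_1,…,w_m), P = Diag(p_1,…,p_m) (a probability distribution), D = Diag(‖a_1‖₂,…,‖a_m‖₂), and assume the coupling P W D^{-2} = (α/‖A‖_F²) I for some α > 0. Let τ be a tuple of η indices drawn i.i.d. with probabilities p_i and M = (1/η) Σ_{i∈τ} w_i e_i e_i^T / ‖a_i‖₂². Then E[M] = (α/‖A‖_F²) I and E[M^T A A^T M] = (1/η)(α/‖A‖_F²) W + α² (1 − 1/η) A A^T / ‖A‖_F⁴. -/

import Mathlib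

open Matrix Finset

noncomputable section

/-- Euclidean dot product of two vectors. -/
def dot {n : ℕ} (x y : Fin n → ℝ) : ℝ := ∑ j, x j * y j

/-- Squared Euclidean norm of a vector. -/
def norm2Sq {n : ℕ} (x : Fin n → ℝ) : ℝ := ∑ j, x j ^ 2

/-- ℓ¹ norm of a vector. -/
def l1Norm {n : ℕ} (x : Fin n → ℝ) : ℝ := ∑ j, |x j|

/-- Squared Euclidean norm of the i-th row of a matrix. -/
def rowNormSq {m n : ℕ} (A : Matrix (Fin m) (Fin n) ℝ) (i : Fin m) : ℝ := ∑ j, A i j ^ 2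

/-- Squared Frobenius norm of a matrix. -/
def frobSq {m n : ℕ} (A : Matrix (Fin m) (Fin n) ℝ) : ℝ := ∑ i, ∑ j, A i j ^ 2

/-- Largest singular value (spectral norm) of a matrix:  sup over `x ≠ 0` of `‖Ax‖₂/‖x‖₂`. -/
def sigmaMax {m n : ℕ} (A : Matrix (Fin m) (Fin n) ℝ) : ℝ :=
  sSup {t : ℝ | ∃ x : Fin n → ℝ, x ≠ 0 ∧
    t = Real.sqrt (norm2Sq (A.mulVec x)) / Real.sqrt (norm2Sq x)}

/-- `σ̃_min(A)`: the minimum over nonzero column-submatrices `A_J` of the smallest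
singular value `σ_min(A_J) = min_{x ≠ 0, supp x ⊆ J} ‖Ax‖₂/‖x‖₂`. -/
def sigmaTildeMin {m n : ℕ} (A : Matrix (Fin m) (Fin n) ℝ) : ℝ :=
  sInf {t : ℝ | ∃ J : Finset (Fin n), (∃ i j, j ∈ J ∧ A i j ≠ 0) ∧
    ∃ x : Fin n → ℝ, x ≠ 0 ∧ (∀ j ∉ J, x j = 0) ∧
      t = Real.sqrt (norm2Sq (A.mulVec x)) / Real.sqrt (norm2Sq x)}

/-- `|x|_min`: the smallest absolute value of the nonzero entries of `x`. -/
def minAbs {n : ℕ} (x : Fin n → ℝ) : ℝ := sInf {t : ℝ | ∃ j, x j ≠ 0 ∧ t = |x j|}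

/-- Componentwise soft shrinkage operator `S_λ(x) = max{|x| - λ, 0}·sign(x)`. -/
def softShrink {n : ℕ} (lam : ℝ) (x : Fin n → ℝ) : Fin n → ℝ :=
  fun j => Real.sign (x j) * max (|x j| - lam) 0

/-- The objective `f(x) = λ‖x‖₁ + ½‖x‖₂²`. -/
def fObj {n : ℕ} (lam : ℝ) (x : Fin n → ℝ) : ℝ := lam * l1Norm x + norm2Sq x / 2

/-- `g` is a subgradient of `f` at `x`. -/
def IsSubgrad {n : ℕ} (f : (Fin n → ℝ) → ℝ) (x g : Fin n → ℝ) : Prop :=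
  ∀ y, f x + dot g (y - x) ≤ f y

/-- Bregman distance `D_f^{x*}(x, y) = f(y) - f(x) - ⟨x*, y - x⟩`. -/
def breg {n : ℕ} (f : (Fin n → ℝ) → ℝ) (xstar x y : Fin n → ℝ) : ℝ :=
  f y - f x - dot xstar (y - x)

/-- The random weighted sampling matrix `M = (1/η) Σ_{i∈τ} w_i e_i e_iᵀ / ‖a_i‖₂²`
associated with a tuple `τ` of `η` sampled row indices. -/
def Mmat {m n : ℕ} (A : Matrix (Fin m) (Fin n) ℝ) (w : Fin m → ℝ) (η : ℕ)
    (τ : Fin η → Fin m) : Matrix (Fin m) (Fin m) ℝ :=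
  (η : ℝ)⁻¹ • ∑ t, (w (τ t) / rowNormSq A (τ t)) • Matrix.single (τ t) (τ t) (1 : ℝ)

/-- Under the coupling `P W D⁻² = (α/‖A‖_F²) I`, the sampling matrix `M`
satisfies `E[M] = (α/‖A‖_F²) I` and
`E[Mᵀ A Aᵀ M] = (1/η)(α/‖A‖_F²) W + α²(1 − 1/η) A Aᵀ/‖A‖_F⁴`. -/
lemma sum_pi_prod {η m : ℕ} (g : Fin η → Fin m → ℝ) :
    ∑ τ : Fin η → Fin m, ∏ t, g t (τ t) = ∏ t, ∑ i, g t i := by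
  rw [Finset.prod_univ_sum, Fintype.piFinset_univ]

lemma key1 {η m : ℕ} (p : Fin m → ℝ) (hp1 : ∑ i, p i = 1) (i : Fin m) :
    ∑ τ : Fin η → Fin m, (∏ t, p (τ t)) * (∑ s, if τ s = i then (1:ℝ) else 0)
      = η * p i := by
  have step : ∀ s : Fin η,
      (∑ τ : Fin η → Fin m, (∏ t, p (τ t)) * (if τ s = i then (1:ℝ) else 0)) = p i := by
    intro s
    have h1 : ∀ τ : Fin η → Fin m,
        (∏ t, p (τ t)) * (if τ s = i then (1:ℝ) else 0)
          = ∏ t, (p (τ t) * (if t = s then (if τ t = i then (1:ℝ) else 0) else 1)) := by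
      intro τ
      rw [Finset.prod_mul_distrib, Finset.prod_ite_eq' Finset.univ s
        (fun t => if τ t = i then (1:ℝ) else 0)]
      simp
    calc ∑ τ : Fin η → Fin m, (∏ t, p (τ t)) * (if τ s = i then (1:ℝ) else 0)
        = ∑ τ : Fin η → Fin m, ∏ t, (p (τ t) * (if t = s then (if τ t = i then (1:ℝ) else 0) else 1)) := by
          exact Finset.sum_congr rfl (fun τ _ => h1 τ)
      _ = ∏ t : Fin η, ∑ x : Fin m, (p x * (if t = s then (if x = i then (1:ℝ) else 0) else 1)) :=
          sum_pi_prod (fun t x => p x * (if t = s then (if x = i then (1:ℝ) else 0) else 1))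
      _ = ∏ t : Fin η, (if t = s then p i else 1) := by
          refine Finset.prod_congr rfl (fun t _ => ?_)
          by_cases h : t = s <;> simp [h, mul_ite, Finset.sum_ite_eq', hp1]
      _ = p i := by simp
  calc ∑ τ : Fin η → Fin m, (∏ t, p (τ t)) * (∑ s, if τ s = i then (1:ℝ) else 0)
      = ∑ s : Fin η, ∑ τ : Fin η → Fin m, (∏ t, p (τ t)) * (if τ s = i then (1:ℝ) else 0) := by
        rw [Finset.sum_comm]
        exact Finset.sum_congr rfl (fun τ _ => Finset.mul_sum _ _ _)
    _ = ∑ s : Fin η, p i := Finset.sum_congr rfl (fun s _ => step s)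
    _ = η * p i := by simp [mul_comm]

lemma key2 {η m : ℕ} (p : Fin m → ℝ) (hp1 : ∑ i, p i = 1) (i j : Fin m) :
    ∑ τ : Fin η → Fin m, (∏ t, p (τ t)) *
        ((∑ s, if τ s = i then (1:ℝ) else 0) * (∑ s, if τ s = j then (1:ℝ) else 0))
      = η * (if i = j then p i else 0) + η * ((η:ℝ) - 1) * (p i * p j) := by
  have Fdiag : ∀ s : Fin η,
      (∑ τ : Fin η → Fin m, (∏ t, p (τ t)) *
        ((if τ s = i then (1:ℝ) else 0) * (if τ s = j then (1:ℝ) else 0)))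
      = if i = j then p i else 0 := by
    intro s
    have h1 : ∀ τ : Fin η → Fin m,
        (∏ t, p (τ t)) * ((if τ s = i then (1:ℝ) else 0) * (if τ s = j then (1:ℝ) else 0))
          = ∏ t, (p (τ t) * (if t = s then
              ((if τ t = i then (1:ℝ) else 0) * (if τ t = j then (1:ℝ) else 0)) else 1)) := by
      intro τ
      rw [Finset.prod_mul_distrib, Finset.prod_ite_eq' Finset.univ s
        (fun t => (if τ t = i then (1:ℝ) else 0) * (if τ t = j then (1:ℝ) else 0))]
      simp
    calc (∑ τ : Fin η → Fin m, (∏ t, p (τ t)) *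
          ((if τ s = i then (1:ℝ) else 0) * (if τ s = j then (1:ℝ) else 0)))
        = ∑ τ : Fin η → Fin m, ∏ t, (p (τ t) * (if t = s then
              ((if τ t = i then (1:ℝ) else 0) * (if τ t = j then (1:ℝ) else 0)) else 1)) :=
          Finset.sum_congr rfl (fun τ _ => h1 τ)
      _ = ∏ t : Fin η, ∑ x : Fin m, (p x * (if t = s then
              ((if x = i then (1:ℝ) else 0) * (if x = j then (1:ℝ) else 0)) else 1)) :=
          sum_pi_prod (fun t x => p x * (if t = s then
              ((if x = i then (1:ℝ) else 0) * (if x = j then (1:ℝ) else 0)) else 1))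
      _ = ∏ t : Fin η, (if t = s then (if i = j then p i else 0) else 1) := by
          refine Finset.prod_congr rfl (fun t _ => ?_)
          by_cases h : t = s
          · by_cases hij : i = j <;>
              simp [h, hij, mul_ite, ite_and, Finset.sum_ite_eq']
            · intro hji; exact absurd hji.symm hij
          · simp [h, hp1]
      _ = (if i = j then p i else 0) := by simp
  have Foff : ∀ s u : Fin η, s ≠ u →
      (∑ τ : Fin η → Fin m, (∏ t, p (τ t)) *
        ((if τ s = i then (1:ℝ) else 0) * (if τ u = j then (1:ℝ) else 0)))
      = p i * p j := by
    intro s u hsu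
    have h1 : ∀ τ : Fin η → Fin m,
        (∏ t, p (τ t)) * ((if τ s = i then (1:ℝ) else 0) * (if τ u = j then (1:ℝ) else 0))
          = ∏ t, (p (τ t) * (if t = s then (if τ t = i then (1:ℝ) else 0) else 1)
              * (if t = u then (if τ t = j then (1:ℝ) else 0) else 1)) := by
      intro τ
      rw [Finset.prod_mul_distrib, Finset.prod_mul_distrib,
        Finset.prod_ite_eq' Finset.univ s (fun t => if τ t = i then (1:ℝ) else 0),
        Finset.prod_ite_eq' Finset.univ u (fun t => if τ t = j then (1:ℝ) else 0)]
      simp [mul_assoc]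
    calc (∑ τ : Fin η → Fin m, (∏ t, p (τ t)) *
          ((if τ s = i then (1:ℝ) else 0) * (if τ u = j then (1:ℝ) else 0)))
        = ∑ τ : Fin η → Fin m, ∏ t,
            (p (τ t) * (if t = s then (if τ t = i then (1:ℝ) else 0) else 1)
              * (if t = u then (if τ t = j then (1:ℝ) else 0) else 1)) :=
          Finset.sum_congr rfl (fun τ _ => h1 τ)
      _ = ∏ t : Fin η, ∑ x : Fin m,
            (p x * (if t = s then (if x = i then (1:ℝ) else 0) else 1)
              * (if t = u then (if x = j then (1:ℝ) else 0) else 1)) :=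
          sum_pi_prod (fun t x => p x * (if t = s then (if x = i then (1:ℝ) else 0) else 1)
              * (if t = u then (if x = j then (1:ℝ) else 0) else 1))
      _ = ∏ t : Fin η, ((if t = s then p i else 1) * (if t = u then p j else 1)) := by
          refine Finset.prod_congr rfl (fun t _ => ?_)
          by_cases hs : t = s
          · have hu : t ≠ u := hs ▸ hsu
            simp [hs, hu, hsu, Ne.symm hsu, mul_ite, Finset.sum_ite_eq']
          · by_cases hu : t = u <;>
              simp [hs, hu, hsu, Ne.symm hsu, mul_ite, Finset.sum_ite_eq', hp1]
      _ = p i * p j := by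
          rw [Finset.prod_mul_distrib]; simp
  calc ∑ τ : Fin η → Fin m, (∏ t, p (τ t)) *
        ((∑ s, if τ s = i then (1:ℝ) else 0) * (∑ s, if τ s = j then (1:ℝ) else 0))
      = ∑ τ : Fin η → Fin m, ∑ s : Fin η, ∑ u : Fin η, (∏ t, p (τ t)) *
          ((if τ s = i then (1:ℝ) else 0) * (if τ u = j then (1:ℝ) else 0)) := by
        refine Finset.sum_congr rfl (fun τ _ => ?_)
        rw [Finset.sum_mul_sum, Finset.mul_sum]
        exact Finset.sum_congr rfl (fun s _ => Finset.mul_sum _ _ _)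
    _ = ∑ s : Fin η, ∑ u : Fin η, ∑ τ : Fin η → Fin m, (∏ t, p (τ t)) *
          ((if τ s = i then (1:ℝ) else 0) * (if τ u = j then (1:ℝ) else 0)) := by
        rw [Finset.sum_comm]
        exact Finset.sum_congr rfl (fun s _ => Finset.sum_comm)
    _ = ∑ s : Fin η, ∑ u : Fin η,
          (if s = u then (if i = j then p i else 0) else p i * p j) := by
        refine Finset.sum_congr rfl (fun s _ => Finset.sum_congr rfl (fun u _ => ?_))
        by_cases h : s = u
        · subst h; rw [if_pos rfl]; exact Fdiag s
        · rw [if_neg h]; exact Foff s u h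
    _ = η * (if i = j then p i else 0) + η * ((η:ℝ) - 1) * (p i * p j) := by
        have : ∀ s : Fin η, ∑ u : Fin η,
            (if s = u then (if i = j then p i else 0) else p i * p j)
            = (if i = j then p i else 0) + ((η:ℝ) - 1) * (p i * p j) := by
          intro s
          have : ∀ u : Fin η, (if s = u then (if i = j then p i else 0) else p i * p j)
              = p i * p j + (if s = u then (if i = j then p i else 0) - p i * p j else 0) := by
            intro u; by_cases h : s = u <;> simp [h]
          rw [Finset.sum_congr rfl (fun u _ => this u), Finset.sum_add_distrib]
          simp [Finset.sum_ite_eq, Finset.card_univ]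
          ring
        rw [Finset.sum_congr rfl (fun s _ => this s)]
        simp [Finset.sum_add_distrib, Finset.card_univ]
        ring

lemma Mdiag {m n η : ℕ} (A : Matrix (Fin m) (Fin n) ℝ) (w : Fin m → ℝ)
    (τ : Fin η → Fin m) :
    Mmat A w η τ = Matrix.diagonal (fun i => (η:ℝ)⁻¹ *
      ((w i / rowNormSq A i) * ∑ s, if τ s = i then (1:ℝ) else 0)) := by
  ext i j
  simp only [Mmat, Matrix.smul_apply, Matrix.sum_apply, smul_eq_mul,
    Matrix.single, Matrix.of_apply, Matrix.diagonal_apply]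
  by_cases h : i = j
  · subst h
    rw [if_pos rfl]
    congr 1
    rw [Finset.mul_sum]
    refine Finset.sum_congr rfl (fun t _ => ?_)
    by_cases ht : τ t = i <;> simp [ht]
  · rw [if_neg h]
    have : ∀ t : Fin η, (w (τ t) / rowNormSq A (τ t)) *
        (if τ t = i ∧ τ t = j then (1:ℝ) else 0) = 0 := by
      intro t
      rcases eq_or_ne (τ t) i with hti | hti
      · have : ¬(τ t = i ∧ τ t = j) := by rintro ⟨h1, h2⟩; exact h (h1 ▸ h2 ▸ rfl)
        simp [this]
      · simp [hti]
    simp only [this, Finset.sum_const_zero, mul_zero]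

theorem moments_under_coupling {m n η : ℕ} (hη : 0 < η)
    (A : Matrix (Fin m) (Fin n) ℝ) (hA : ∀ i, A i ≠ 0)
    (w p : Fin m → ℝ) (hp0 : ∀ i, 0 ≤ p i) (hp1 : ∑ i, p i = 1)
    (α : ℝ) (hα : 0 < α)
    (hcoup : ∀ i, p i * w i / rowNormSq A i = α / frobSq A) :
    (∑ τ : Fin η → Fin m, (∏ t, p (τ t)) • Mmat A w η τ
        = (α / frobSq A) • (1 : Matrix (Fin m) (Fin m) ℝ)) ∧
    (∑ τ : Fin η → Fin m, (∏ t, p (τ t)) • ((Mmat A w η τ)ᵀ * A * Aᵀ * Mmat A w η τ)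
        = ((η : ℝ)⁻¹ * (α / frobSq A)) • Matrix.diagonal w
          + (α ^ 2 * (1 - (η : ℝ)⁻¹) / frobSq A ^ 2) • (A * Aᵀ)) := by
  have hn : (η:ℝ) ≠ 0 := Nat.cast_ne_zero.mpr hη.ne'
  have hrpos : ∀ i, 0 < rowNormSq A i := by
    intro i
    obtain ⟨k, hk⟩ := Function.ne_iff.mp (hA i)
    exact Finset.sum_pos' (fun j _ => sq_nonneg _) ⟨k, Finset.mem_univ k, lt_of_le_of_ne (sq_nonneg _) (Ne.symm (pow_ne_zero 2 hk))⟩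
  have hr : ∀ i, rowNormSq A i ≠ 0 := fun i => (hrpos i).ne'
  have hFr : frobSq A = ∑ i, rowNormSq A i := rfl
  have hFpos : ∀ _ : Fin m, 0 < frobSq A := by
    intro i
    rw [hFr]
    exact Finset.sum_pos' (fun j _ => (hrpos j).le) ⟨i, Finset.mem_univ i, hrpos i⟩
  have hc' : ∀ i, p i * w i * frobSq A = α * rowNormSq A i := by
    intro i
    exact (div_eq_div_iff (hr i) (hFpos i).ne').mp (hcoup i)
  constructor
  · ext i j
    rw [Matrix.sum_apply]
    simp only [Mdiag A w, Matrix.smul_apply, Matrix.diagonal_apply, Matrix.one_apply,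
      smul_eq_mul]
    by_cases h : i = j
    · subst h
      simp only [eq_self_iff_true, if_true]
      have step : ∑ τ : Fin η → Fin m, (∏ t, p (τ t)) *
          ((η:ℝ)⁻¹ * ((w i / rowNormSq A i) * ∑ s, if τ s = i then (1:ℝ) else 0))
          = ((η:ℝ)⁻¹ * (w i / rowNormSq A i)) *
            (∑ τ : Fin η → Fin m, (∏ t, p (τ t)) * (∑ s, if τ s = i then (1:ℝ) else 0)) := by
        rw [Finset.mul_sum]
        exact Finset.sum_congr rfl (fun τ _ => by ring)
      rw [step, key1 p hp1 i]
      have h1 := hc' i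
      field_simp
      rw [div_eq_div_iff (hr i) (hFpos i).ne']
      linear_combination h1
    · simp [h]
  · ext i j
    rw [Matrix.sum_apply]
    have hMM : ∀ τ : Fin η → Fin m,
        ((Mmat A w η τ)ᵀ * A * Aᵀ * Mmat A w η τ) i j
        = ((η:ℝ)⁻¹ * ((w i / rowNormSq A i) * ∑ s, if τ s = i then (1:ℝ) else 0))
          * (A * Aᵀ) i j
          * ((η:ℝ)⁻¹ * ((w j / rowNormSq A j) * ∑ s, if τ s = j then (1:ℝ) else 0)) := by
      intro τ
      rw [Mdiag A w τ, Matrix.diagonal_transpose, Matrix.mul_assoc _ A Aᵀ,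
        Matrix.mul_diagonal, Matrix.diagonal_mul]
    simp only [Matrix.smul_apply, smul_eq_mul, hMM]
    have step : ∑ τ : Fin η → Fin m, (∏ t, p (τ t)) *
        (((η:ℝ)⁻¹ * ((w i / rowNormSq A i) * ∑ s, if τ s = i then (1:ℝ) else 0))
          * (A * Aᵀ) i j
          * ((η:ℝ)⁻¹ * ((w j / rowNormSq A j) * ∑ s, if τ s = j then (1:ℝ) else 0)))
        = ((η:ℝ)⁻¹ * (w i / rowNormSq A i)) * ((η:ℝ)⁻¹ * (w j / rowNormSq A j)) * (A * Aᵀ) i j *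
          (∑ τ : Fin η → Fin m, (∏ t, p (τ t)) *
            ((∑ s, if τ s = i then (1:ℝ) else 0) * (∑ s, if τ s = j then (1:ℝ) else 0))) := by
      rw [Finset.mul_sum]
      exact Finset.sum_congr rfl (fun τ _ => by ring)
    rw [step, key2 p hp1 i j]
    simp only [Matrix.add_apply, Matrix.smul_apply, Matrix.diagonal_apply, smul_eq_mul]
    by_cases h : i = j
    · subst h
      simp only [if_pos rfl]
      have hGii : (A * Aᵀ) i i = rowNormSq A i := by
        simp [Matrix.mul_apply, rowNormSq, sq]
      rw [hGii]
      have h1 := hc' i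
      field_simp
      have hF := (hFpos i).ne'
      rw [if_pos trivial, if_pos trivial, div_eq_div_iff (hr i) (pow_ne_zero 2 hF)]
      linear_combination (w i * frobSq A +
        ((η:ℝ)-1) * (p i * w i * frobSq A + α * rowNormSq A i)) * h1
    · simp only [if_neg h, mul_zero, zero_add]
      have h1 := hc' i
      have h2 := hc' j
      field_simp
      have hF := (hFpos i).ne'
      rw [div_eq_div_iff (mul_ne_zero (hr i) (hr j)) (pow_ne_zero 2 hF)]
      linear_combination ((η:ℝ)-1) * (A * Aᵀ) i j *
        ((p j * w j * frobSq A) * h1 + (α * rowNormSq A i) * h2)
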